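/- arXiv:2406.06568 — 2 statements merged into one kernel-verified Lean document; each statement's English description precedes it below -/
import Mathlib

section
/- For every r > 0, the modified Bessel function of the second kind K₀ satisfies √π e^{−r}/√(2(r + 1/4)) < K₀(r) < √π e^{−r}/√(2r). -/
open MeasureTheory

open Set Real

lemma K0aux (a : ℝ) (ha : 0 < a) :
    IntegrableOn (fun t => Real.cosh (t / 2) * Real.exp (a - a * Real.cosh t)) (Set.Ioi 0) ∧
      (∫ t in Set.Ioi (0 : ℝ), Real.cosh (t / 2) * Real.exp (a - a * Real.cosh t))
        = Real.sqrt (Real.pi / a) / Real.sqrt 2 := by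
  have hs2 : (0 : ℝ) < Real.sqrt 2 := by positivity
  set g : ℝ → ℝ := fun t => Real.sqrt 2 * Real.sinh (t / 2) with hgdef
  set g' : ℝ → ℝ := fun t => Real.sqrt 2 * (Real.cosh (t / 2) * (1 / 2)) with hg'def
  have hderiv : ∀ t ∈ Set.Ioi (0 : ℝ), HasDerivWithinAt g (g' t) (Set.Ioi 0) t := by
    intro t _
    have h1 : HasDerivAt (fun t : ℝ => Real.sinh (t / 2)) (Real.cosh (t / 2) * (1 / 2)) t := by
      have := (Real.hasDerivAt_sinh (t / 2)).comp t ((hasDerivAt_id t).div_const 2)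
      simpa [Function.comp_def] using this
    exact ((h1.const_mul (Real.sqrt 2)).hasDerivWithinAt)
  have hinj : Set.InjOn g (Set.Ioi 0) := by
    intro x _ y _ h
    have h2 := mul_left_cancel₀ hs2.ne' h
    rw [Real.sinh_inj] at h2
    linarith
  have himg : g '' Set.Ioi 0 = Set.Ioi 0 := by
    ext x
    constructor
    · rintro ⟨t, ht, rfl⟩
      exact mul_pos hs2 (Real.sinh_pos_iff.2 (by linarith [Set.mem_Ioi.1 ht]))
    · intro hx
      refine ⟨2 * Real.arsinh (x / Real.sqrt 2), ?_, ?_⟩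
      · have : 0 < Real.arsinh (x / Real.sqrt 2) :=
          Real.arsinh_pos_iff.2 (div_pos hx hs2)
        simp only [Set.mem_Ioi]; linarith
      · simp only [hgdef]
        rw [show 2 * Real.arsinh (x / Real.sqrt 2) / 2 = Real.arsinh (x / Real.sqrt 2) by ring,
          Real.sinh_arsinh]
        field_simp
  have hGauss : IntegrableOn (fun u => Real.exp (-(a * u ^ 2))) (Set.Ioi 0) := by
    have := (integrable_exp_neg_mul_sq ha).integrableOn (s := Set.Ioi 0)
    simpa [neg_mul] using this
  have keyInt := (integrableOn_image_iff_integrableOn_abs_deriv_smul measurableSet_Ioi hderiv hinj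
    (fun u => Real.exp (-(a * u ^ 2)))).1 (by rwa [himg])
  have key := integral_image_eq_integral_abs_deriv_smul measurableSet_Ioi hderiv hinj
    (fun u => Real.exp (-(a * u ^ 2)))
  rw [himg] at key
  have hcosh : ∀ t : ℝ, Real.cosh t = 2 * Real.sinh (t / 2) ^ 2 + 1 := by
    intro t
    have h1 := Real.cosh_two_mul (t / 2)
    have h2 := Real.cosh_sq (t / 2)
    rw [mul_div_cancel₀ _ (two_ne_zero)] at h1
    linarith
  have hfun : ∀ t ∈ Set.Ioi (0 : ℝ),
      |g' t| • Real.exp (-(a * g t ^ 2))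
        = Real.sqrt 2 / 2 * (Real.cosh (t / 2) * Real.exp (a - a * Real.cosh t)) := by
    intro t _
    have h1 : g t ^ 2 = 2 * Real.sinh (t / 2) ^ 2 := by
      rw [hgdef]; simp only [mul_pow, Real.sq_sqrt (by norm_num : (0:ℝ) ≤ 2)]
    have h2 : -(a * g t ^ 2) = a - a * Real.cosh t := by
      rw [h1, hcosh t]; ring
    have h3 : |g' t| = g' t := abs_of_nonneg (by
      have := Real.cosh_pos (x := t / 2)
      positivity)
    rw [h3, h2, smul_eq_mul, hg'def]
    ring
  have hIntc : IntegrableOn (fun t => Real.sqrt 2 / 2 *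
      (Real.cosh (t / 2) * Real.exp (a - a * Real.cosh t))) (Set.Ioi 0) :=
    (integrableOn_congr_fun hfun measurableSet_Ioi).1 keyInt
  constructor
  · have h4 := hIntc.const_mul (2 / Real.sqrt 2)
    refine IntegrableOn.congr_fun h4 (fun t _ => ?_) measurableSet_Ioi
    field_simp
  · have hL : (∫ u in Set.Ioi (0 : ℝ), Real.exp (-(a * u ^ 2))) = Real.sqrt (Real.pi / a) / 2 := by
      rw [← integral_gaussian_Ioi a]
      congr 1; ext u; rw [neg_mul]
    have hR : (∫ t in Set.Ioi (0 : ℝ), |g' t| • Real.exp (-(a * g t ^ 2)))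
        = Real.sqrt 2 / 2 * ∫ t in Set.Ioi (0 : ℝ),
            Real.cosh (t / 2) * Real.exp (a - a * Real.cosh t) := by
      rw [setIntegral_congr_fun measurableSet_Ioi hfun, MeasureTheory.integral_const_mul]
    rw [hL, hR] at key
    rw [eq_div_iff hs2.ne']
    rw [eq_comm] at key
    field_simp at key ⊢
    nlinarith [Real.sq_sqrt (by norm_num : (0:ℝ) ≤ 2), Real.sqrt_nonneg 2,
      Real.sqrt_nonneg (Real.pi / a)]


lemma K0intLt {F G : ℝ → ℝ} (hF : IntegrableOn F (Set.Ioi 0)) (hG : IntegrableOn G (Set.Ioi 0))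
    (h : ∀ t ∈ Set.Ioi (0 : ℝ), F t < G t) :
    (∫ t in Set.Ioi (0 : ℝ), F t) < ∫ t in Set.Ioi (0 : ℝ), G t := by
  have hpos : 0 < ∫ t in Set.Ioi (0 : ℝ), (G t - F t) := by
    rw [setIntegral_pos_iff_support_of_nonneg_ae
      ((ae_restrict_iff' measurableSet_Ioi).2 (ae_of_all _ fun t ht => sub_nonneg.2 (h t ht).le))
      (hG.sub hF)]
    refine lt_of_lt_of_le ?_ (measure_mono (Set.subset_inter
      (fun t ht => sub_ne_zero.2 (h t ht).ne') Set.Subset.rfl))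
    rw [Real.volume_Ioi]
    exact ENNReal.zero_lt_top
  have hsub := integral_sub hG hF
  rw [hsub] at hpos
  linarith

/-- The modified Bessel function of the second kind of order `0`,
`K₀(r) = ∫₀^∞ e^{−r cosh t} dt`. -/
noncomputable def K0 (r : ℝ) : ℝ := ∫ t in Set.Ioi (0 : ℝ), Real.exp (-(r * Real.cosh t))

/-- For every `r > 0`, `√π e^{−r}/√(2(r + 1/4)) < K₀(r) < √π e^{−r}/√(2r)`. -/
theorem stmt7 (r : ℝ) (hr : 0 < r) :
    Real.sqrt Real.pi * Real.exp (-r) / Real.sqrt (2 * (r + 1 / 4)) < K0 r ∧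
      K0 r < Real.sqrt Real.pi * Real.exp (-r) / Real.sqrt (2 * r) := by
  obtain ⟨hI1, hE1⟩ := K0aux r hr
  obtain ⟨hI2, hE2⟩ := K0aux (r + 1 / 4) (by linarith)
  set f : ℝ → ℝ := fun t => Real.exp (-(r * Real.cosh t)) with hfdef
  have hexp1 : ∀ t : ℝ, Real.exp (-r) * Real.exp (r - r * Real.cosh t) = f t := by
    intro t; rw [hfdef, ← Real.exp_add]; ring_nf
  set U : ℝ → ℝ := fun t => Real.exp (-r) *
    (Real.cosh (t / 2) * Real.exp (r - r * Real.cosh t)) with hUdef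
  set L : ℝ → ℝ := fun t => Real.exp (-r) *
    (Real.cosh (t / 2) * Real.exp ((r + 1 / 4) - (r + 1 / 4) * Real.cosh t)) with hLdef
  have hUf : ∀ t : ℝ, U t = Real.cosh (t / 2) * f t := by
    intro t; rw [hUdef]; simp only; rw [← hexp1 t]; ring
  have hUint : IntegrableOn U (Set.Ioi 0) := hI1.const_mul _
  have hLint : IntegrableOn L (Set.Ioi 0) := hI2.const_mul _
  have hfint : IntegrableOn f (Set.Ioi 0) := by
    refine hUint.mono' ?_ ?_
    · exact (Real.continuous_exp.comp
        (continuous_const.mul Real.continuous_cosh).neg).aestronglyMeasurable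
    · refine ae_of_all _ fun t => ?_
      rw [Real.norm_eq_abs, abs_of_nonneg (Real.exp_nonneg _), hUf t]
      nlinarith [Real.one_le_cosh (t / 2), Real.exp_pos (-(r * Real.cosh t))]
  have hK0 : K0 r = ∫ t in Set.Ioi (0 : ℝ), f t := rfl
  have hcosh : ∀ t : ℝ, Real.cosh t = 2 * Real.sinh (t / 2) ^ 2 + 1 := by
    intro t
    have h1 := Real.cosh_two_mul (t / 2)
    have h2 := Real.cosh_sq (t / 2)
    rw [mul_div_cancel₀ _ (two_ne_zero)] at h1
    linarith
  have hsqr : (0:ℝ) < Real.sqrt r := Real.sqrt_pos.2 hr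
  have hsqr4 : (0:ℝ) < Real.sqrt (r + 1 / 4) := Real.sqrt_pos.2 (by linarith)
  have hsq2 : (0:ℝ) < Real.sqrt 2 := by positivity
  constructor
  · -- lower bound
    have hpt : ∀ t ∈ Set.Ioi (0 : ℝ), L t < f t := by
      intro t ht
      have ht0 : (0:ℝ) < t := ht
      set y : ℝ := Real.sinh (t / 2) ^ 2 with hydef
      have hy : 0 < y := by
        have := Real.sinh_pos_iff.2 (by linarith : (0:ℝ) < t / 2)
        positivity
      have hsqc : Real.cosh (t / 2) ^ 2 = y + 1 := by
        rw [Real.cosh_sq]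
      have h5 : y + 1 < Real.exp y := by
        have := Real.add_one_lt_exp hy.ne'
        linarith
      have h6 : Real.exp (y / 2) ^ 2 = Real.exp y := by
        rw [sq, ← Real.exp_add, add_halves]
      have h7 : Real.cosh (t / 2) < Real.exp (y / 2) := by
        refine lt_of_pow_lt_pow_left₀ 2 (Real.exp_nonneg _) ?_
        rw [h6, hsqc]; exact h5
      have h8 : Real.cosh (t / 2) * Real.exp (-(y / 2)) < 1 := by
        have hpos := Real.exp_pos (-(y / 2))
        have hmul : Real.exp (y / 2) * Real.exp (-(y / 2)) = 1 := by
          rw [← Real.exp_add]; simp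
        nlinarith
      have hL : L t = Real.cosh (t / 2) * Real.exp (-(y / 2)) * f t := by
        have h9 : Real.exp (-r) * Real.exp ((r + 1 / 4) - (r + 1 / 4) * Real.cosh t)
            = Real.exp (-(y / 2)) * Real.exp (-(r * Real.cosh t)) := by
          rw [← Real.exp_add, ← Real.exp_add]
          congr 1
          rw [hcosh t, ← hydef]
          ring
        rw [hLdef, hfdef]
        simp only
        rw [show Real.exp (-r) * (Real.cosh (t / 2) *
            Real.exp ((r + 1 / 4) - (r + 1 / 4) * Real.cosh t))
            = Real.cosh (t / 2) * (Real.exp (-r) *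
              Real.exp ((r + 1 / 4) - (r + 1 / 4) * Real.cosh t)) by ring, h9]
        ring
      rw [hL]
      nlinarith [Real.exp_pos (-(r * Real.cosh t)), Real.cosh_pos (x := t / 2),
        Real.exp_pos (-(y / 2))]
    have hlt := K0intLt hLint hfint hpt
    have hLval : (∫ t in Set.Ioi (0 : ℝ), L t)
        = Real.exp (-r) * (Real.sqrt (Real.pi / (r + 1 / 4)) / Real.sqrt 2) := by
      rw [hLdef, MeasureTheory.integral_const_mul, hE2]
    have heq : Real.exp (-r) * (Real.sqrt (Real.pi / (r + 1 / 4)) / Real.sqrt 2)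
        = Real.sqrt Real.pi * Real.exp (-r) / Real.sqrt (2 * (r + 1 / 4)) := by
      rw [Real.sqrt_div Real.pi_pos.le, Real.sqrt_mul (by norm_num : (0:ℝ) ≤ 2)]
      field_simp
    rw [hK0, ← heq, ← hLval]
    exact hlt
  · -- upper bound
    have hpt : ∀ t ∈ Set.Ioi (0 : ℝ), f t < U t := by
      intro t ht
      have ht0 : (0:ℝ) < t := ht
      rw [hUf t]
      have h1 : 1 < Real.cosh (t / 2) := Real.one_lt_cosh.2 (by positivity)
      nlinarith [Real.exp_pos (-(r * Real.cosh t))]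
    have hlt := K0intLt hfint hUint hpt
    have hUval : (∫ t in Set.Ioi (0 : ℝ), U t)
        = Real.exp (-r) * (Real.sqrt (Real.pi / r) / Real.sqrt 2) := by
      rw [hUdef, MeasureTheory.integral_const_mul, hE1]
    have heq : Real.exp (-r) * (Real.sqrt (Real.pi / r) / Real.sqrt 2)
        = Real.sqrt Real.pi * Real.exp (-r) / Real.sqrt (2 * r) := by
      rw [Real.sqrt_div Real.pi_pos.le, Real.sqrt_mul (by norm_num : (0:ℝ) ≤ 2)]
      field_simp
    rw [hK0, ← heq, ← hUval]
    exact hlt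
end

section
/- Let T be a self-adjoint invertible linear operator on a Hilbert space H with exactly n negative eigenvalues λ₁ < λ₂ < ⋯ < λₙ < 0, each with one-dimensional eigenspace spanned by normalized eigenfunctions e₁,…,eₙ. Let f₁,…,fₙ ∈ H with (fᵢ, eᵢ) ≠ 0 for each i. Define the n×n matrix M with entries m_{ij} = (T⁻¹fᵢ, fⱼ) for i ≠ j, and m_{ii} = (T⁻¹fᵢ, fᵢ) − Σ_{j≠i} (1/λⱼ)(fᵢ, eⱼ)². If M is negative definite, then for every u ∈ H with (u, f₁) = ⋯ = (u, fₙ) = 0 and u ≠ 0, one has (Tu, u) > 0. -/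
open scoped RealInnerProductSpace

lemma weinstein_aux (b C : ℝ) (hC : 0 ≤ C) (h : ∀ t : ℝ, 0 ≤ 2*(t*b) + t^2*C) : b = 0 := by
  by_contra hb
  have hC1 : (0:ℝ) < C + 1 := by linarith
  have h1 := h (-b/(C+1))
  have h2 : (2*((-b/(C+1))*b) + (-b/(C+1))^2*C) * (C+1)^2 = -(b^2*C) - 2*b^2 := by
    field_simp; ring
  have h3 : 0 ≤ -(b^2*C) - 2*b^2 := by
    rw [← h2]; exact mul_nonneg h1 (by positivity)
  have hb2 : 0 < b^2 := by positivity
  nlinarith [mul_nonneg (sq_nonneg b) hC]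

/-- Generalized Weinstein coercivity lemma. Let `T` be a self-adjoint invertible linear
operator on a real Hilbert space `H` with exactly `n` negative eigenvalues
`λ₁ < ⋯ < λₙ < 0`, each simple, with normalized eigenfunctions `e₁, …, eₙ`, and with the
quadratic form `(Tw, w)` nonnegative on the orthogonal complement of `span{e₁, …, eₙ}`.
Let `f₁, …, fₙ ∈ H` with `(fᵢ, eᵢ) ≠ 0`. Define the matrix `M` by
`m_{ij} = (T⁻¹fᵢ, fⱼ)` for `i ≠ j` and
`m_{ii} = (T⁻¹fᵢ, fᵢ) − Σ_{j≠i} (1/λⱼ)(fᵢ, eⱼ)²`. If `M` is negative definite, then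
any nonzero `u` with `(u, f₁) = ⋯ = (u, fₙ) = 0` satisfies `(Tu, u) > 0`. -/
theorem stmt8 {H : Type*} [NormedAddCommGroup H] [InnerProductSpace ℝ H] [CompleteSpace H]
    (n : ℕ) (T : H ≃L[ℝ] H)
    (hsa : ∀ x y : H, ⟪(T : H →L[ℝ] H) x, y⟫ = ⟪x, (T : H →L[ℝ] H) y⟫)
    (lam : Fin n → ℝ) (e : Fin n → H)
    (hlamneg : ∀ i, lam i < 0) (hlammono : StrictMono lam)
    (hnorm : ∀ i, ‖e i‖ = 1)
    (heig : ∀ i, (T : H →L[ℝ] H) (e i) = lam i • e i)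
    (hcoer : ∀ w : H, (∀ i, ⟪w, e i⟫ = 0) → 0 ≤ ⟪(T : H →L[ℝ] H) w, w⟫)
    (f : Fin n → H) (hf : ∀ i, ⟪f i, e i⟫ ≠ 0)
    (M : Matrix (Fin n) (Fin n) ℝ)
    (hM : ∀ i j, M i j = if i = j then
        ⟪T.symm (f i), f i⟫ -
          ∑ k ∈ Finset.univ.erase i, (1 / lam k) * ⟪f i, e k⟫ ^ 2
      else ⟪T.symm (f i), f j⟫)
    (hMnegdef : (-M).PosDef)
    (u : H) (hu : u ≠ 0) (horth : ∀ i, ⟪u, f i⟫ = 0) :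
    0 < ⟪(T : H →L[ℝ] H) u, u⟫ := by
  classical
  by_contra hpos
  push_neg at hpos
  -- orthonormality of the eigenfunctions
  have hortho : ∀ i j : Fin n, i ≠ j → ⟪e i, e j⟫ = 0 := by
    intro i j hij
    have h1 := hsa (e i) (e j)
    rw [heig i, heig j, real_inner_smul_left, real_inner_smul_right] at h1
    have h2 : (lam i - lam j) * ⟪e i, e j⟫ = 0 := by ring_nf; linarith
    rcases mul_eq_zero.mp h2 with h | h
    · exact absurd (hlammono.injective (by linarith)) hij
    · exact h
  have henorm : ∀ k, ⟪e k, e k⟫ = (1:ℝ) := fun k => by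
    rw [real_inner_self_eq_norm_mul_norm, hnorm, one_mul]
  set g : Fin n → H := fun i => T.symm (f i) with hg
  have hTg : ∀ i, (T : H →L[ℝ] H) (g i) = f i := fun i => by simp [hg]
  have hTug : ∀ i, ⟪(T : H →L[ℝ] H) u, g i⟫ = 0 := by
    intro i; rw [hsa u (g i), hTg]; exact horth i
  have hsymm_sa : ∀ x y : H, ⟪T.symm x, y⟫ = ⟪x, T.symm y⟫ := by
    intro x y
    have := hsa (T.symm x) (T.symm y)
    simpa using this.symm
  -- build a nonzero kernel vector for the (n+1)×(n+1) singular system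
  set vec : Fin (n+1) → H := Fin.snoc g u with hvec
  set A : Matrix (Fin (n+1)) (Fin (n+1)) ℝ :=
    fun k j => Fin.lastCases 0 (fun k' => ⟪vec j, e k'⟫) k with hA
  have hdet : A.det = 0 :=
    Matrix.det_eq_zero_of_row_eq_zero (Fin.last n) (fun j => by simp [hA])
  obtain ⟨v, hv0, hvA⟩ := (Matrix.exists_mulVec_eq_zero_iff).mpr hdet
  set a : ℝ := v (Fin.last n) with ha
  set c : Fin n → ℝ := fun i => v i.castSucc with hc
  set x : H := a • u + ∑ i, c i • g i with hx
  have hxe : ∀ k : Fin n, ⟪x, e k⟫ = 0 := by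
    intro k
    have h1 := congrFun hvA k.castSucc
    simp only [Matrix.mulVec, dotProduct, hA, Fin.lastCases_castSucc,
      Pi.zero_apply] at h1
    rw [Fin.sum_univ_castSucc] at h1
    simp only [hvec, Fin.snoc_castSucc, Fin.snoc_last] at h1
    have h2 : ⟪x, e k⟫ = ∑ i : Fin n, ⟪g i, e k⟫ * v i.castSucc + ⟪u, e k⟫ * v (Fin.last n) := by
      rw [hx, inner_add_left, real_inner_smul_left, sum_inner]
      simp only [real_inner_smul_left]
      rw [add_comm]
      congr 1
      · exact Finset.sum_congr rfl fun i _ => by rw [hc]; ring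
      · rw [ha]; ring
    exact h2.trans h1
  -- the quadratic form on x
  set S : ℝ := ∑ i, ∑ j, c i * c j * ⟪T.symm (f i), f j⟫ with hS
  have hTx : (T : H →L[ℝ] H) x = a • (T : H →L[ℝ] H) u + ∑ i, c i • f i := by
    rw [hx]; simp [map_add, map_smul, map_sum, hTg]
  have hexp : ⟪(T : H →L[ℝ] H) x, x⟫ = a^2 * ⟪(T : H →L[ℝ] H) u, u⟫ + S := by
    rw [hTx, hx, inner_add_left, inner_add_right, inner_add_right]
    have e1 : ⟪a • (T : H →L[ℝ] H) u, a • u⟫ = a^2 * ⟪(T : H →L[ℝ] H) u, u⟫ := by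
      rw [real_inner_smul_left, real_inner_smul_right]; ring
    have e2 : ⟪a • (T : H →L[ℝ] H) u, ∑ i, c i • g i⟫ = 0 := by
      rw [real_inner_smul_left, inner_sum,
        Finset.sum_eq_zero (fun i _ => by rw [real_inner_smul_right, hTug i, mul_zero]),
        mul_zero]
    have e3 : ⟪∑ i, c i • f i, a • u⟫ = 0 := by
      rw [sum_inner]
      have h3 : ∀ i, ⟪c i • f i, a • u⟫ = (0:ℝ) := fun i => by
        rw [real_inner_smul_left, real_inner_smul_right, real_inner_comm, horth]; ring
      simp [h3]
    have e4 : ⟪∑ i, c i • f i, ∑ j, c j • g j⟫ = S := by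
      rw [sum_inner, hS]
      refine Finset.sum_congr rfl fun i _ => ?_
      rw [real_inner_smul_left, inner_sum, Finset.mul_sum]
      refine Finset.sum_congr rfl fun j _ => ?_
      rw [real_inner_smul_right]
      simp only [hg]
      rw [← hsymm_sa]
      ring
    rw [e1, e2, e3, e4]; ring
  have hcx : 0 ≤ a^2 * ⟪(T : H →L[ℝ] H) u, u⟫ + S := hexp ▸ hcoer x hxe
  have haq : a^2 * ⟪(T : H →L[ℝ] H) u, u⟫ ≤ 0 :=
    mul_nonpos_iff.mpr (Or.inl ⟨sq_nonneg a, hpos⟩)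
  -- the constraint vector part must vanish
  set corr : Fin n → ℝ :=
    fun i => ∑ k ∈ Finset.univ.erase i, (1 / lam k) * ⟪f i, e k⟫ ^ 2 with hcorr
  have hterm : ∀ i j, c i * c j * ⟪T.symm (f i), f j⟫
      = c i * c j * M i j + (if i = j then c i^2 * corr i else 0) := by
    intro i j
    rw [hM i j]
    by_cases h : i = j
    · subst h
      rw [if_pos rfl, if_pos rfl]
      simp only [hcorr]
      ring
    · simp only [if_neg h]; ring
  have hsplit : S = (∑ i, ∑ j, c i * c j * M i j) + ∑ i, c i^2 * corr i := by
    have h1 : S = ∑ i, ∑ j, (c i * c j * M i j + if i = j then c i^2 * corr i else 0) :=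
      hS.trans (Finset.sum_congr rfl fun i _ => Finset.sum_congr rfl fun j _ => hterm i j)
    rw [h1]
    simp [Finset.sum_add_distrib, Finset.sum_ite_eq]
  have hcorr_nonpos : ∀ i, corr i ≤ 0 := by
    intro i
    refine Finset.sum_nonpos fun k _ => ?_
    have hk : 1 / lam k < 0 := div_neg_of_pos_of_neg one_pos (hlamneg k)
    exact mul_nonpos_iff.mpr (Or.inr ⟨hk.le, sq_nonneg _⟩)
  have hc0 : c = 0 := by
    by_contra hcne
    have hMc := hMnegdef.dotProduct_mulVec_pos hcne
    simp only [dotProduct, Matrix.mulVec, star_trivial, Matrix.neg_apply,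
      Finset.mul_sum] at hMc
    have hMc2 : (0:ℝ) < ∑ i, ∑ j, c i * (-(M i j) * c j) := hMc
    have h2 : (∑ i, ∑ j, c i * (-(M i j) * c j)) = -∑ i, ∑ j, c i * c j * M i j := by
      rw [← Finset.sum_neg_distrib]
      exact Finset.sum_congr rfl fun i _ => by
        rw [← Finset.sum_neg_distrib]
        exact Finset.sum_congr rfl fun j _ => by ring
    rw [h2] at hMc2
    have hsum2 : ∑ i, c i^2 * corr i ≤ 0 :=
      Finset.sum_nonpos fun i _ =>
        mul_nonpos_iff.mpr (Or.inl ⟨sq_nonneg _, hcorr_nonpos i⟩)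
    have : S < 0 := by rw [hsplit]; linarith
    linarith
  have hane : a ≠ 0 := by
    intro ha0
    apply hv0
    funext j
    refine Fin.lastCases ?_ (fun i => ?_) j
    · rw [← ha, ha0]; rfl
    · have := congrFun hc i
      rw [hc0] at this
      exact (this.symm.trans rfl : v i.castSucc = 0)
  have hue : ∀ k, ⟪u, e k⟫ = 0 := by
    intro k
    have h1 := hxe k
    rw [hx] at h1
    simp only [hc0, Pi.zero_apply, zero_smul, Finset.sum_const_zero, add_zero,
      real_inner_smul_left] at h1
    exact (mul_eq_zero.mp h1).resolve_left hane
  have hq0 : ⟪(T : H →L[ℝ] H) u, u⟫ = 0 := le_antisymm hpos (hcoer u hue)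
  have hTue : ∀ k, ⟪(T : H →L[ℝ] H) u, e k⟫ = 0 := fun k => by
    rw [hsa u (e k), heig k, real_inner_smul_right, hue k, mul_zero]
  have hTuw : ∀ w : H, (∀ k, ⟪w, e k⟫ = 0) → ⟪(T : H →L[ℝ] H) u, w⟫ = 0 := by
    intro w hw
    have hC : 0 ≤ ⟪(T : H →L[ℝ] H) w, w⟫ := hcoer w hw
    refine weinstein_aux _ _ hC fun t => ?_
    have h1 := hcoer (u + t • w) (fun k => by
      rw [inner_add_left, real_inner_smul_left, hue k, hw k]; ring)
    have hTwu : ⟪(T : H →L[ℝ] H) w, u⟫ = ⟪(T : H →L[ℝ] H) u, w⟫ := by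
      rw [hsa w u, real_inner_comm]
    have hexp2 : ⟪(T : H →L[ℝ] H) (u + t • w), u + t • w⟫
        = ⟪(T : H →L[ℝ] H) u, u⟫ + 2*(t*⟪(T : H →L[ℝ] H) u, w⟫)
          + t^2*⟪(T : H →L[ℝ] H) w, w⟫ := by
      rw [map_add, map_smul, inner_add_left, inner_add_right, inner_add_right,
        real_inner_smul_left, real_inner_smul_left, real_inner_smul_right,
        real_inner_smul_right, hTwu]
      ring
    rw [hexp2, hq0] at h1
    linarith
  have hTuy : ∀ y : H, ⟪(T : H →L[ℝ] H) u, y⟫ = 0 := by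
    intro y
    have hwk : ∀ k, ⟪y - ∑ j, ⟪y, e j⟫ • e j, e k⟫ = 0 := by
      intro k
      rw [inner_sub_left, sum_inner]
      simp only [real_inner_smul_left]
      rw [Finset.sum_eq_single k (fun j _ hj => by rw [hortho j k hj, mul_zero])
        (by simp)]
      rw [henorm k, mul_one, sub_self]
    have h2 := hTuw _ hwk
    rw [inner_sub_right, inner_sum] at h2
    simp only [real_inner_smul_right] at h2
    have h3 : ∑ j, ⟪y, e j⟫ * ⟪(T : H →L[ℝ] H) u, e j⟫ = 0 :=
      Finset.sum_eq_zero fun j _ => by rw [hTue j, mul_zero]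
    rw [h3] at h2
    linarith
  have hTu0 : (T : H →L[ℝ] H) u = 0 :=
    inner_self_eq_zero.mp (hTuy ((T : H →L[ℝ] H) u))
  exact hu (T.injective (by rw [map_zero]; exact hTu0))
end
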